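/- If A and B are commutative rings such that the category of A-modules is equivalent to the category of B-modules (A and B are Morita equivalent), then A and B are isomorphic as rings. -/

import Mathlib

open CategoryTheory

universe u

namespace MoritaAux

variable (A : Type u) [CommRing A]

/-- A commutative ring is isomorphic to the endomorphism ring of the identity
functor of its module category. -/
def endRingEquiv : A ≃+* End (𝟭 (ModuleCat.{u} A)) where
  toFun a :=
    { app := fun M => ModuleCat.ofHom (a • (LinearMap.id : M →ₗ[A] M))
      naturality := fun M N f => by
        ext x
        show a • f.hom x = f.hom (a • x)
        rw [map_smul] }
  invFun φ := φ.app (ModuleCat.of A A) (1 : A)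
  left_inv a := by
    show a • (1 : A) = a
    simp
  right_inv φ := by
    apply NatTrans.ext
    funext M
    ext (x : M)
    have w := LinearMap.congr_fun (congrArg ModuleCat.Hom.hom
      (φ.naturality (show ModuleCat.of A A ⟶ M from ModuleCat.ofHom (LinearMap.toSpanSingleton A M x)))) (1 : A)
    have w' : φ.app M ((LinearMap.toSpanSingleton A M x) (1 : A)) =
        (LinearMap.toSpanSingleton A M x) (φ.app (ModuleCat.of A A) (1 : A)) := w
    rw [LinearMap.toSpanSingleton_apply, LinearMap.toSpanSingleton_apply, one_smul] at w'
    show (φ.app (ModuleCat.of A A) (1 : A)) • x = φ.app M x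
    exact w'.symm
  map_add' a b := by
    apply NatTrans.ext
    funext M
    ext (x : M)
    show ((a + b) • (LinearMap.id : M →ₗ[A] M)) x =
      (a • (LinearMap.id : M →ₗ[A] M)) x + (b • (LinearMap.id : M →ₗ[A] M)) x
    simp [add_smul]
  map_mul' a b := by
    apply NatTrans.ext
    funext M
    ext (x : M)
    show ((a * b) • (LinearMap.id : M →ₗ[A] M)) x =
      (a • (LinearMap.id : M →ₗ[A] M)) ((b • (LinearMap.id : M →ₗ[A] M)) x)
    simp [mul_smul, mul_comm a b]

variable {A}
variable {B : Type u} [CommRing B] (e : ModuleCat.{u} A ≌ ModuleCat.{u} B)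

instance functor_additive : e.functor.Additive :=
  Functor.additive_of_preserves_binary_products e.functor

/-- The equivalence of endofunctor categories induced by `e`. -/
noncomputable def endoEquiv :
    (ModuleCat.{u} A ⥤ ModuleCat.{u} A) ≌ (ModuleCat.{u} B ⥤ ModuleCat.{u} B) :=
  e.congrRight.trans e.congrLeft

/-- The image of the identity functor is isomorphic to the identity functor. -/
noncomputable def endoIso :
    (endoEquiv e).functor.obj (𝟭 (ModuleCat.{u} A)) ≅ 𝟭 (ModuleCat.{u} B) :=
  Functor.isoWhiskerLeft e.inverse (e.functor.leftUnitor) ≪≫ e.counitIso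

/-- Conjugation by the equivalence on endomorphisms of the identity functor. -/
noncomputable def endMulEquiv :
    End (𝟭 (ModuleCat.{u} A)) ≃* End (𝟭 (ModuleCat.{u} B)) :=
  ((endoEquiv e).fullyFaithfulFunctor.mulEquivEnd (𝟭 (ModuleCat.{u} A))).trans
    (Iso.conj (endoIso e))

lemma endMulEquiv_add (x y : End (𝟭 (ModuleCat.{u} A))) :
    endMulEquiv e (x + y) = endMulEquiv e x + endMulEquiv e y := by
  show (endoIso e).conj ((endoEquiv e).functor.map (x + y)) =
    (endoIso e).conj ((endoEquiv e).functor.map x) +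
    (endoIso e).conj ((endoEquiv e).functor.map y)
  have hmap : (endoEquiv e).functor.map (x + y) =
      (endoEquiv e).functor.map x + (endoEquiv e).functor.map y := by
    apply NatTrans.ext
    funext X
    show e.functor.map ((x + y).app (e.inverse.obj X)) =
      ((endoEquiv e).functor.map x + (endoEquiv e).functor.map y).app X
    rw [NatTrans.app_add, NatTrans.app_add, e.functor.map_add]
    rfl
  rw [hmap]
  simp only [Iso.conj_apply, End.mul_def, Preadditive.add_comp, Preadditive.comp_add]

end MoritaAux

/-- Morita equivalent commutative rings are isomorphic. -/
theorem commRing_isom_of_moritaEquivalent (A B : Type u) [CommRing A] [CommRing B]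
    (e : ModuleCat.{u} A ≌ ModuleCat.{u} B) : Nonempty (A ≃+* B) := by
  exact ⟨{ toFun := fun a =>
             (MoritaAux.endRingEquiv B).symm (MoritaAux.endMulEquiv e (MoritaAux.endRingEquiv A a)),
           invFun := fun b =>
             (MoritaAux.endRingEquiv A).symm
               ((MoritaAux.endMulEquiv e).symm (MoritaAux.endRingEquiv B b)),
           left_inv := fun a => by simp,
           right_inv := fun b => by simp,
           map_mul' := fun x y => by
             simp only [map_mul],
           map_add' := fun x y => by
             simp only [map_add, MoritaAux.endMulEquiv_add] }⟩
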